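/- For every n >= 7 with 4 not dividing n, the generalized Petersen graph GP(n,3) admits no perfect 2-coloring with parameter matrix [[0,3],[1,2]]. -/
import Mathlib


/-- The generalized Petersen graph `GP n k`. Vertices are pairs `(s, i)` with
`s : Bool` (`false` = outer vertex `aᵢ`, `true` = inner vertex `bᵢ`) and `i : ZMod n`.
Edges: `aᵢ aᵢ₊₁`, `aᵢ bᵢ`, `bᵢ bᵢ₊ₖ`. -/
def GP (n k : ℕ) : SimpleGraph (Bool × ZMod n) :=
  SimpleGraph.fromRel (fun v w =>
    (v.1 = false ∧ w.1 = false ∧ w.2 = v.2 + 1) ∨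
    (v.1 = false ∧ w.1 = true ∧ w.2 = v.2) ∨
    (v.1 = true ∧ w.1 = true ∧ w.2 = v.2 + (k : ZMod n)))

/-- `T` is a perfect 2-coloring of `G` with parameter matrix `A`:
`T` is surjective onto the two colors (color `0` = white = "1", color `1` = black = "2"),
and every vertex of color `i` has exactly `A i j` neighbors of color `j`. -/
def IsPerfectColoring {V : Type*} (G : SimpleGraph V) (T : V → Fin 2)
    (A : Matrix (Fin 2) (Fin 2) ℕ) : Prop :=
  Function.Surjective T ∧
  ∀ v : V, ∀ j : Fin 2, {w | G.Adj v w ∧ T w = j}.ncard = A (T v) j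

lemma shift_iff {n : ℕ} (c i j : ZMod n) (hc : c ≠ 0) :
    (¬ i = j ∧ (j = i + c ∨ i = j + c)) ↔ (j = i - c ∨ j = i + c) := by
  constructor
  · rintro ⟨hne, h | h⟩
    · exact Or.inr h
    · exact Or.inl (by rw [h]; ring)
  · rintro (h | h)
    · exact ⟨fun he => hc (by rw [h] at he; linear_combination he),
        Or.inr (by rw [h]; ring)⟩
    · exact ⟨fun he => hc (by linear_combination -h - he), Or.inl h⟩

lemma ncard_triple {α : Type*} [DecidableEq α] (x1 x2 x3 : α)
    (h12 : x1 ≠ x2) (h13 : x1 ≠ x3) (h23 : x2 ≠ x3)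
    (p : α → Prop) [DecidablePred p] :
    {w | (w = x1 ∨ w = x2 ∨ w = x3) ∧ p w}.ncard =
      (if p x1 then 1 else 0) + (if p x2 then 1 else 0) + (if p x3 then 1 else 0) := by
  have hset : {w | (w = x1 ∨ w = x2 ∨ w = x3) ∧ p w} =
      ↑(({x1, x2, x3} : Finset α).filter p) := by
    ext w
    simp only [Set.mem_setOf_eq, Finset.coe_filter, Finset.mem_insert, Finset.mem_singleton]
  rw [hset, Set.ncard_coe_finset, Finset.card_filter]
  rw [Finset.sum_insert (by simp [h12, h13]), Finset.sum_insert (by simp [h23]),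
    Finset.sum_singleton]
  ring

theorem stmt_8 (n : ℕ) (hn : 7 ≤ n) (hndvd : ¬ 4 ∣ n) (T : Bool × ZMod n → Fin 2) :
    ¬ IsPerfectColoring (GP n 3) T !![0, 3; 1, 2] := by
  rintro ⟨-, hdeg⟩
  haveI : NeZero n := NeZero.of_pos (by omega)
  have hcast : ∀ m : ℕ, 0 < m → m ≤ 6 → (m : ZMod n) ≠ 0 := by
    intro m hm hm6 h
    rw [ZMod.natCast_eq_zero_iff] at h
    have := Nat.le_of_dvd hm h
    omega
  have h1 : (1 : ZMod n) ≠ 0 := by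
    have := hcast 1 (by norm_num) (by norm_num); push_cast at this; exact this
  have h2 : (2 : ZMod n) ≠ 0 := by
    have := hcast 2 (by norm_num) (by norm_num); push_cast at this; exact this
  have h3 : (3 : ZMod n) ≠ 0 := by
    have := hcast 3 (by norm_num) (by norm_num); push_cast at this; exact this
  have h6 : (6 : ZMod n) ≠ 0 := by
    have := hcast 6 (by norm_num) (by norm_num); push_cast at this; exact this
  set f : ZMod n → ℕ := fun i => if T (false, i) = 0 then 1 else 0 with hf
  set g : ZMod n → ℕ := fun i => if T (true, i) = 0 then 1 else 0 with hg
  -- outer adjacency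
  have adj_out : ∀ i : ZMod n, ∀ w : Bool × ZMod n, (GP n 3).Adj (false, i) w ↔
      (w = ((false : Bool), i-1) ∨ w = ((false : Bool), i+1) ∨ w = ((true : Bool), i)) := by
    intro i ⟨b, j⟩
    cases b <;> simp [GP, SimpleGraph.fromRel_adj, Prod.ext_iff]
    exact shift_iff 1 i j h1
  have adj_in : ∀ i : ZMod n, ∀ w : Bool × ZMod n, (GP n 3).Adj (true, i) w ↔
      (w = ((true : Bool), i-3) ∨ w = ((true : Bool), i+3) ∨ w = ((false : Bool), i)) := by
    intro i ⟨b, j⟩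
    cases b <;> simp [GP, SimpleGraph.fromRel_adj, Prod.ext_iff]
    · exact eq_comm
    · exact shift_iff 3 i j h3
  -- the key local equations
  have houter : ∀ i : ZMod n, f (i-1) + f (i+1) + g i + f i = 1 := by
    intro i
    have hcount := hdeg (false, i) 0
    have hsetEq : {w | (GP n 3).Adj (false, i) w ∧ T w = 0} =
        {w | (w = ((false : Bool), i-1) ∨ w = ((false : Bool), i+1) ∨ w = ((true : Bool), i))
          ∧ T w = 0} := by
      ext w; rw [Set.mem_setOf_eq, Set.mem_setOf_eq, adj_out i w]
    rw [hsetEq, ncard_triple _ _ _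
        (by simp [Prod.ext_iff]; intro h; exact h2 (by linear_combination -h))
        (by simp [Prod.ext_iff])
        (by simp [Prod.ext_iff])] at hcount
    have hv : T (false, i) = 0 ∨ T (false, i) = 1 := by omega
    rcases hv with hv | hv <;> rw [hv] at hcount <;>
      simp only [Matrix.cons_val', Matrix.cons_val_zero, Matrix.cons_val_one, Matrix.head_cons,
        Matrix.empty_val', Matrix.cons_val_fin_one, Matrix.of_apply, Matrix.head_fin_const]
        at hcount <;>
      simp only [hf, hg] at hcount ⊢ <;> rw [hv] <;>
      simp only [reduceIte, one_ne_zero, Fin.isValue] <;> omega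
  have hinner : ∀ i : ZMod n, g (i-3) + g (i+3) + f i + g i = 1 := by
    intro i
    have hcount := hdeg (true, i) 0
    have hsetEq : {w | (GP n 3).Adj (true, i) w ∧ T w = 0} =
        {w | (w = ((true : Bool), i-3) ∨ w = ((true : Bool), i+3) ∨ w = ((false : Bool), i))
          ∧ T w = 0} := by
      ext w; rw [Set.mem_setOf_eq, Set.mem_setOf_eq, adj_in i w]
    rw [hsetEq, ncard_triple _ _ _
        (by simp [Prod.ext_iff]; intro h; exact h6 (by linear_combination -h))
        (by simp [Prod.ext_iff])
        (by simp [Prod.ext_iff])] at hcount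
    have hv : T (true, i) = 0 ∨ T (true, i) = 1 := by omega
    rcases hv with hv | hv <;> rw [hv] at hcount <;>
      simp only [Matrix.cons_val', Matrix.cons_val_zero, Matrix.cons_val_one, Matrix.head_cons,
        Matrix.empty_val', Matrix.cons_val_fin_one, Matrix.of_apply, Matrix.head_fin_const]
        at hcount <;>
      simp only [hf, hg] at hcount ⊢ <;> rw [hv] <;>
      simp only [reduceIte, one_ne_zero, Fin.isValue] <;> omega
  -- sum them up
  have hshift : ∀ (h : ZMod n → ℕ) (c : ZMod n), ∑ i : ZMod n, h (i + c) = ∑ i : ZMod n, h i :=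
    fun h c => Fintype.sum_equiv (Equiv.addRight c) _ _ (fun i => rfl)
  have hshift' : ∀ (h : ZMod n → ℕ) (c : ZMod n), ∑ i : ZMod n, h (i - c) = ∑ i : ZMod n, h i :=
    fun h c => Fintype.sum_equiv (Equiv.subRight c) _ _ (fun i => rfl)
  have hsum1 : ∑ i : ZMod n, (f (i-1) + f (i+1) + g i + f i) = n := by
    simp only [houter]
    simp [ZMod.card]
  have hsum2 : ∑ i : ZMod n, (g (i-3) + g (i+3) + f i + g i) = n := by
    simp only [hinner]
    simp [ZMod.card]
  rw [Finset.sum_add_distrib, Finset.sum_add_distrib, Finset.sum_add_distrib,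
    hshift, hshift'] at hsum1 hsum2
  omega
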